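/- Let n ≥ 1, let G = P_n be the path on vertices {1,…,n}, and let C ⊆ {1,…,n} be such that every vertex of {1,…,n} ∖ C has at least one neighbor in P_n. If C is a good configuration for P_n, then γ_gr(P_n;C) = n; otherwise, γ_gr(P_n;C) = n − 1. -/

import Mathlib

namespace LegalSeq

variable {V : Type*}

/-- The generalized neighborhood `N⟨v⟩`: the closed neighborhood of `v` if `v ∈ C`,
the open neighborhood otherwise. -/
noncomputable def gN [Fintype V] (G : SimpleGraph V) (C : Set V) (v : V) : Finset V := by
  classical
  exact (Set.toFinite (if v ∈ C then insert v (G.neighborSet v) else G.neighborSet v)).toFinset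

/-- Union of the generalized neighborhoods of the vertices of a list. -/
noncomputable def nUnion [Fintype V] (G : SimpleGraph V) (C : Set V) (l : List V) : Finset V := by
  classical
  exact l.toFinset.biUnion (gN G C)

/-- A list of pairwise distinct vertices is a legal sequence if every vertex of the sequence,
except possibly the first one, has a generalized neighbor that is not in the generalized
neighborhood of any preceding vertex. -/
def IsLegal [Fintype V] (G : SimpleGraph V) (C : Set V) (l : List V) : Prop :=
  l.Nodup ∧ ∀ (i : ℕ) (h : i < l.length), 0 < i →
    ¬ (gN G C (l.get ⟨i, h⟩) ⊆ nUnion G C (l.take i))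

/-- A sequence is dominating if the generalized neighborhoods of its members cover all vertices. -/
def IsDom [Fintype V] (G : SimpleGraph V) (C : Set V) (l : List V) : Prop :=
  nUnion G C l = Finset.univ

/-- The Grundy domination number of the instance `(G; C)`: the maximum length of a sequence
that is both legal and dominating. -/
noncomputable def grundy [Fintype V] (G : SimpleGraph V) (C : Set V) : ℕ :=
  sSup {k : ℕ | ∃ l : List V, IsLegal G C l ∧ IsDom G C l ∧ l.length = k}

/-- The path graph `P_n` on the vertex set `{1, …, n}`, with edges `{i, i+1}`. -/
def pathG (n : ℕ) : SimpleGraph ↥(Set.Icc 1 n) where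
  Adj u v := (u : ℕ) + 1 = (v : ℕ) ∨ (v : ℕ) + 1 = (u : ℕ)
  symm := ⟨by intro u v h; tauto⟩
  loopless := ⟨by intro u h; rcases h with h | h <;> omega⟩

/-- `GoodConf C a b` : `C` is a good configuration for the path with vertex set `{a, …, b}`
(labels taken in `ℕ`, edges between consecutive integers). -/
inductive GoodConf (C : Set ℕ) : ℕ → ℕ → Prop
  | single (a : ℕ) (h : a ∈ C) : GoodConf C a a
  | pair (a : ℕ) (h : ¬(a ∈ C ∧ a + 1 ∈ C)) : GoodConf C a (a + 1)
  | left (a b : ℕ) (h : a + 2 ≤ b) (ha : a ∉ C) (hg : GoodConf C (a + 2) b) : GoodConf C a b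
  | right (a b : ℕ) (h : a + 2 ≤ b) (hb : b ∉ C) (hg : GoodConf C a (b - 2)) : GoodConf C a b

/-- `u` is in the generalized neighborhood of `v` (numbers on the line). -/
def inGN (C : Set ℕ) (v u : ℕ) : Prop := u = v + 1 ∨ u + 1 = v ∨ (u = v ∧ v ∈ C)

/-- Abstract witness for a perfect legal dominating sequence on the interval `[a,b]`. -/
structure WitOn (C : Set ℕ) (f σ : ℕ → ℕ) (a b : ℕ) : Prop where
  maps : ∀ v, a ≤ v → v ≤ b → a ≤ f v ∧ f v ≤ b
  inj : ∀ v w, a ≤ v → v ≤ b → a ≤ w → w ≤ b → f v = f w → v = w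
  opts : ∀ v, a ≤ v → v ≤ b → f v = v + 1 ∨ f v + 1 = v ∨ (f v = v ∧ v ∈ C)
  ord : ∀ v w, a ≤ v → v ≤ b → a ≤ w → w ≤ b → v ≠ w → inGN C v (f w) → σ w < σ v

variable {C : Set ℕ} {f σ : ℕ → ℕ} {a b : ℕ}

lemma WitOn.restrictL1 (h : WitOn C f σ a b) (hab : a < b) (hfa : f a = a) :
    WitOn C f σ (a+1) b := by
  refine ⟨?_, ?_, ?_, ?_⟩
  · intro v h1 h2
    have m := h.maps v (by omega) h2
    rcases Nat.eq_or_lt_of_le m.1 with he | hl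
    · exfalso; exact absurd (h.inj v a (by omega) h2 (le_refl a) hab.le (by omega)) (by omega)
    · omega
  · intro v w h1 h2 h3 h4 he; exact h.inj v w (by omega) h2 (by omega) h4 he
  · intro v h1 h2; exact h.opts v (by omega) h2
  · intro v w h1 h2 h3 h4 h5 h6; exact h.ord v w (by omega) h2 (by omega) h4 h5 h6

lemma WitOn.restrictL2 (h : WitOn C f σ a b) (hab : a + 1 < b) (h1 : f a = a + 1)
    (h2 : f (a+1) = a) : WitOn C f σ (a+2) b := by
  refine ⟨?_, ?_, ?_, ?_⟩
  · intro v hv1 hv2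
    have m := h.maps v (by omega) hv2
    have hne1 : f v ≠ a + 1 := fun he =>
      absurd (h.inj v a (by omega) hv2 (le_refl a) (by omega) (by omega)) (by omega)
    have hne2 : f v ≠ a := fun he =>
      absurd (h.inj v (a+1) (by omega) hv2 (by omega) (by omega) (by omega)) (by omega)
    omega
  · intro v w hv1 hv2 hw1 hw2 he; exact h.inj v w (by omega) hv2 (by omega) hw2 he
  · intro v hv1 hv2; exact h.opts v (by omega) hv2
  · intro v w hv1 hv2 hw1 hw2 h5 h6; exact h.ord v w (by omega) hv2 (by omega) hw2 h5 h6

lemma WitOn.restrictR2 (h : WitOn C f σ a b) (hab : a + 1 < b) (h1 : f b = b - 1)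
    (h2 : f (b-1) = b) : WitOn C f σ a (b-2) := by
  refine ⟨?_, ?_, ?_, ?_⟩
  · intro v hv1 hv2
    have m := h.maps v hv1 (by omega)
    have hne1 : f v ≠ b - 1 := fun he =>
      absurd (h.inj v b hv1 (by omega) (by omega) (le_refl b) (by omega)) (by omega)
    have hne2 : f v ≠ b := fun he =>
      absurd (h.inj v (b-1) hv1 (by omega) (by omega) (by omega) (by omega)) (by omega)
    omega
  · intro v w hv1 hv2 hw1 hw2 he; exact h.inj v w hv1 (by omega) hw1 (by omega) he
  · intro v hv1 hv2; exact h.opts v hv1 (by omega)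
  · intro v w hv1 hv2 hw1 hw2 h5 h6; exact h.ord v w hv1 (by omega) hw1 (by omega) h5 h6

/-- The first block of a witness is a singleton or an adjacent pair. -/
lemma WitOn.blockL (h : WitOn C f σ a b) (hab : a < b) :
    f a = a ∨ (f a = a + 1 ∧ f (a+1) = a) := by
  rcases h.opts a (le_refl a) hab.le with h1 | h1 | h1
  · by_cases h2 : f (a+1) = a
    · exact Or.inr ⟨h1, h2⟩
    · exfalso
      have key : ∀ k, a + k ≤ b → f (a + k) = a + k + 1 := by
        intro k
        induction k using Nat.strong_induction_on with
        | _ k ih =>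
          intro hk
          match k with
          | 0 => simpa using h1
          | 1 =>
            rcases h.opts (a+1) (by omega) (by omega) with g | g | g
            · omega
            · omega
            · exact absurd (h.inj (a+1) a (by omega) (by omega) (le_refl a) (by omega)
                (by omega)) (by omega)
          | (k+2) =>
            have i1 := ih k (by omega) (by omega)
            have i2 := ih (k+1) (by omega) (by omega)
            rcases h.opts (a+(k+2)) (by omega) (by omega) with g | g | g
            · omega
            · exact absurd (h.inj (a+(k+2)) (a+k) (by omega) (by omega) (by omega) (by omega)
                (by omega)) (by omega)
            · exact absurd (h.inj (a+(k+2)) (a+(k+1)) (by omega) (by omega) (by omega) (by omega)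
                (by omega)) (by omega)
      have hb := key (b - a) (by omega)
      have hm := h.maps (a + (b - a)) (by omega) (by omega)
      omega
  · have := (h.maps a (le_refl a) hab.le).1; omega
  · exact Or.inl h1.1

/-- The last block of a witness is a singleton or an adjacent pair. -/
lemma WitOn.blockR (h : WitOn C f σ a b) (hab : a < b) :
    f b = b ∨ (f b = b - 1 ∧ f (b-1) = b) := by
  rcases h.opts b (by omega) (le_refl b) with h1 | h1 | h1
  · have := (h.maps b (by omega) (le_refl b)).2; omega
  · -- f b = b - 1
    by_cases h2 : f (b-1) = b
    · exact Or.inr ⟨by omega, h2⟩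
    · exfalso
      have key : ∀ k, k ≤ b - a → f (b - k) + 1 = b - k := by
        intro k
        induction k using Nat.strong_induction_on with
        | _ k ih =>
          intro hk
          match k with
          | 0 => simpa using h1
          | 1 =>
            rcases h.opts (b-1) (by omega) (by omega) with g | g | g
            · omega
            · omega
            · exact absurd (h.inj (b-1) b (by omega) (by omega) (by omega) (le_refl b)
                (by omega)) (by omega)
          | (k+2) =>
            have i1 := ih k (by omega) (by omega)
            have i2 := ih (k+1) (by omega) (by omega)
            rcases h.opts (b-(k+2)) (by omega) (by omega) with g | g | g
            · exact absurd (h.inj (b-(k+2)) (b-k) (by omega) (by omega) (by omega) (by omega)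
                (by omega)) (by omega)
            · omega
            · exact absurd (h.inj (b-(k+2)) (b-(k+1)) (by omega) (by omega) (by omega) (by omega)
                (by omega)) (by omega)
      have ha := key (b - a) (by omega)
      have hm := (h.maps (b - (b - a)) (by omega) (by omega)).1
      omega
  · exact Or.inl h1.1


/-- The right-to-left chain lemma. -/
lemma Zlem (C : Set ℕ) (f σ : ℕ → ℕ) (b : ℕ) (hbC : b ∈ C) :
    ∀ d a, b - a ≤ d → a ≤ b → WitOn C f σ a b →
      a = b ∨ (f a = a + 1 ∧ f (a+1) = a ∧ σ a < σ (a+1)) := by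
  intro d
  induction d with
  | zero => intro a h1 h2 _; left; omega
  | succ d ih =>
    intro a hd hab hW
    by_cases hab' : a = b
    · exact Or.inl hab'
    have hab2 : a < b := lt_of_le_of_ne hab hab'
    rcases hW.blockL hab2 with h1 | ⟨h1, h2⟩
    · -- first block singleton, a ∈ C
      exfalso
      have haC : a ∈ C := by
        rcases hW.opts a (le_refl a) hab with g | g | g
        · omega
        · omega
        · exact g.2
      by_cases hb1 : a + 1 = b
      · have hfb : f b = b := by
          have m := hW.maps b hab (le_refl b)
          rcases Nat.eq_or_lt_of_le m.1 with he | hl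
          · exact absurd (hW.inj b a hab (le_refl b) (le_refl a) hab (by omega)) (by omega)
          · omega
        have t1 : σ a < σ b := hW.ord b a hab (le_refl b) (le_refl a) hab (by omega)
          (Or.inr (Or.inl (by omega)))
        have t2 : σ b < σ a := hW.ord a b (le_refl a) hab hab (le_refl b) (by omega)
          (Or.inl (by omega))
        omega
      · have hW' := hW.restrictL1 hab2 h1
        rcases ih (a+1) (by omega) (by omega) hW' with h | ⟨p1, p2, p3⟩
        · omega
        · simp only [show a + 1 + 1 = a + 2 from rfl] at p1 p2 p3
          have t1 : σ a < σ (a+1) := hW.ord (a+1) a (by omega) (by omega) (le_refl a) hab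
            (by omega) (Or.inr (Or.inl (by omega)))
          have t2 : σ (a+2) < σ a := hW.ord a (a+2) (le_refl a) hab (by omega) (by omega)
            (by omega) (Or.inl (by omega))
          omega
    · -- first block pair
      by_cases hb1 : a + 1 = b
      · subst hb1
        refine Or.inr ⟨h1, h2, ?_⟩
        have := hW.ord (a+1) a hab (le_refl _) (le_refl a) hab (by omega)
          (Or.inr (Or.inr ⟨by omega, hbC⟩))
        omega
      · have hW' := hW.restrictL2 (by omega) h1 h2
        rcases ih (a+2) (by omega) (by omega) hW' with h | ⟨p1, p2, p3⟩
        · -- a + 2 = b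
          subst h
          refine Or.inr ⟨h1, h2, ?_⟩
          have hfb : f (a+2) = a+2 := by
            have m := hW.maps (a+2) hab (by omega)
            have hne1 : f (a+2) ≠ a + 1 := fun he =>
              absurd (hW.inj (a+2) a hab (by omega) (le_refl a) hab (by omega)) (by omega)
            have hne2 : f (a+2) ≠ a := fun he =>
              absurd (hW.inj (a+2) (a+1) hab (by omega) (by omega) (by omega) (by omega))
                (by omega)
            omega
          have t1 : σ a < σ (a+2) := hW.ord (a+2) a (by omega) (by omega) (le_refl a) hab
            (by omega) (Or.inr (Or.inl (by omega)))
          have t2 : σ (a+2) < σ (a+1) := hW.ord (a+1) (a+2) (by omega) (by omega) hab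
            (by omega) (by omega) (Or.inl (by omega))
          omega
        · simp only [show a + 2 + 1 = a + 3 from rfl] at p1 p2 p3
          have hm3 := (hW'.maps (a+2) (le_refl _) (by omega)).2
          refine Or.inr ⟨h1, h2, ?_⟩
          have t1 : σ a < σ (a+2) := hW.ord (a+2) a (by omega) (by omega) (le_refl a) hab
            (by omega) (Or.inr (Or.inl (by omega)))
          have t2 : σ (a+3) < σ (a+1) := hW.ord (a+1) (a+3) (by omega) (by omega) (by omega)
            (by omega) (by omega) (Or.inl (by omega))
          omega

/-- Cycle contradiction: both endpoints in `C` is impossible on a nontrivial interval. -/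
lemma Xlem (hW : WitOn C f σ a b) (h : a < b) (haC : a ∈ C) (hbC : b ∈ C) : False := by
  rcases Zlem C f σ b hbC (b-a) a (le_refl _) h.le hW with h1 | ⟨p1, p2, p3⟩
  · omega
  · have : σ (a+1) < σ a := hW.ord a (a+1) (le_refl a) h.le (by omega) (by omega) (by omega)
      (Or.inr (Or.inr ⟨by omega, haC⟩))
    omega

/-- A witness on `[a,b]` yields a good configuration. -/
lemma witToGood : ∀ d a b, b - a ≤ d → a ≤ b → WitOn C f σ a b → GoodConf C a b := by
  intro d
  induction d with
  | zero =>
    intro a b h1 h2 hW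
    have hba : b = a := by omega
    have m := hW.maps a (le_refl a) (by omega)
    have haC : a ∈ C := by
      rcases hW.opts a (le_refl a) (by omega) with g | g | g
      · omega
      · omega
      · exact g.2
    exact hba ▸ GoodConf.single a haC
  | succ d ih =>
    intro a b hd hab hW
    by_cases hab0 : b = a
    · exact ih a b (by omega) hab hW
    have hab2 : a < b := lt_of_le_of_ne hab (Ne.symm hab0)
    by_cases hab1 : b = a + 1
    · subst hab1
      rcases hW.blockL hab2 with h1 | ⟨h1, h2⟩
      · exfalso
        have haC : a ∈ C := by
          rcases hW.opts a (le_refl a) hab with g | g | g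
          · omega
          · omega
          · exact g.2
        have hfb : f (a+1) = a + 1 := by
          have m := hW.maps (a+1) (by omega) (le_refl _)
          rcases Nat.eq_or_lt_of_le m.1 with he | hl
          · exact absurd (hW.inj (a+1) a (by omega) (le_refl _) (le_refl a) (by omega)
              (by omega)) (by omega)
          · omega
        have hbC : a + 1 ∈ C := by
          rcases hW.opts (a+1) (by omega) (le_refl _) with g | g | g
          · omega
          · omega
          · exact g.2
        exact Xlem hW (by omega) haC hbC
      · refine GoodConf.pair a (fun ⟨haC, hbC⟩ => ?_)
        exact Xlem hW (by omega) haC hbC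
    · -- b ≥ a + 2
      have hge : a + 2 ≤ b := by omega
      rcases hW.blockL hab2 with h1 | ⟨h1, h2⟩
      · -- singleton at a, so a ∈ C
        have haC : a ∈ C := by
          rcases hW.opts a (le_refl a) hab with g | g | g
          · omega
          · omega
          · exact g.2
        rcases hW.blockR hab2 with hb1 | ⟨hb1, hb2⟩
        · have hbC : b ∈ C := by
            rcases hW.opts b hab (le_refl b) with g | g | g
            · have := (hW.maps b hab (le_refl b)).2; omega
            · omega
            · exact g.2
          exact absurd (Xlem hW hab2 haC hbC) (fun h => h)
        · by_cases hbC : b ∈ C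
          · exact absurd (Xlem hW hab2 haC hbC) (fun h => h)
          · exact GoodConf.right a b hge hbC
              (ih a (b-2) (by omega) (by omega) (hW.restrictR2 (by omega) hb1 hb2))
      · by_cases haC : a ∈ C
        · rcases hW.blockR hab2 with hb1 | ⟨hb1, hb2⟩
          · have hbC : b ∈ C := by
              rcases hW.opts b hab (le_refl b) with g | g | g
              · have := (hW.maps b hab (le_refl b)).2; omega
              · omega
              · exact g.2
            exact absurd (Xlem hW hab2 haC hbC) (fun h => h)
          · by_cases hbC : b ∈ C
            · exact absurd (Xlem hW hab2 haC hbC) (fun h => h)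
            · exact GoodConf.right a b hge hbC
                (ih a (b-2) (by omega) (by omega) (hW.restrictR2 (by omega) hb1 hb2))
        · exact GoodConf.left a b hge haC
            (ih (a+2) b (by omega) (by omega) (hW.restrictL2 (by omega) h1 h2))

lemma goodToWit {a b : ℕ} (hg : GoodConf C a b) :
    ∃ f σ : ℕ → ℕ, WitOn C f σ a b ∧ ∀ v, a ≤ v → v ≤ b → σ v ≤ b - a := by
  induction hg with
  | single a haC =>
    refine ⟨id, fun _ => 0, ⟨?_, ?_, ?_, ?_⟩, ?_⟩
    · intro v h1 h2; exact ⟨h1, h2⟩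
    · intro v w _ _ _ _ he; exact he
    · intro v h1 h2
      have : v = a := by omega
      exact Or.inr (Or.inr ⟨rfl, this ▸ haC⟩)
    · intro v w h1 h2 h3 h4 h5 _; exact absurd (by omega : v = w) h5
    · intro v _ _; exact Nat.zero_le _
  | pair a h =>
    by_cases hc : a + 1 ∈ C
    · have haC : a ∉ C := fun hh => h ⟨hh, hc⟩
      refine ⟨fun v => if v = a then a + 1 else a,
              fun v => if v = a then 0 else 1, ⟨?_, ?_, ?_, ?_⟩, ?_⟩
      · intro v h1 h2; (try dsimp only); split_ifs <;> omega
      · intro v w h1 h2 h3 h4 he; (try dsimp only at he); split_ifs at he <;> omega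
      · intro v h1 h2; (try dsimp only); split_ifs with e1
        · exact Or.inl (by omega)
        · exact Or.inr (Or.inl (by omega))
      · intro v w h1 h2 h3 h4 h5 h6
        try dsimp only at h6 ⊢
        simp only [inGN] at h6
        by_cases ew1 : w = a
        · rw [if_pos ew1] at h6 ⊢
          rw [if_neg (show ¬ v = a by omega)]
          omega
        · rw [if_neg ew1] at h6 ⊢
          rw [if_pos (show v = a by omega)]
          exfalso
          rcases h6 with g | g | ⟨g, gc⟩
          · omega
          · omega
          · exact haC (by rw [show a = v by omega]; exact gc)
      · intro v _ _; (try dsimp only); split_ifs <;> omega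
    · refine ⟨fun v => if v = a then a + 1 else a,
              fun v => if v = a then 1 else 0, ⟨?_, ?_, ?_, ?_⟩, ?_⟩
      · intro v h1 h2; (try dsimp only); split_ifs <;> omega
      · intro v w h1 h2 h3 h4 he; (try dsimp only at he); split_ifs at he <;> omega
      · intro v h1 h2; (try dsimp only); split_ifs with e1
        · exact Or.inl (by omega)
        · exact Or.inr (Or.inl (by omega))
      · intro v w h1 h2 h3 h4 h5 h6
        try dsimp only at h6 ⊢
        simp only [inGN] at h6
        by_cases ew1 : w = a
        · rw [if_pos ew1] at h6 ⊢
          exfalso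
          rcases h6 with g | g | ⟨g, gc⟩
          · omega
          · omega
          · exact hc (by rw [show a + 1 = v by omega]; exact gc)
        · rw [if_neg ew1] at h6 ⊢
          rw [if_pos (show v = a by omega)]
          omega
      · intro v _ _; (try dsimp only); split_ifs <;> omega
  | left a b hab ha hg ih =>
    obtain ⟨f, σ, hW, hB⟩ := ih
    refine ⟨fun v => if v = a then a + 1 else if v = a + 1 then a else f v,
            fun v => if v = a then 0 else if v = a + 1 then b - a else σ v + 1,
            ⟨?_, ?_, ?_, ?_⟩, ?_⟩
    · intro v h1 h2; (try dsimp only); split_ifs with e1 e2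
      · omega
      · omega
      · have := hW.maps v (by omega) h2; omega
    · intro v w h1 h2 h3 h4 he; try dsimp only at he
      split_ifs at he with e1 e2 e3 e4 e5
      · omega
      · omega
      · have := hW.maps w (by omega) h4; omega
      · omega
      · omega
      · have := hW.maps w (by omega) h4; omega
      · have := hW.maps v (by omega) h2; omega
      · have := hW.maps v (by omega) h2; omega
      · exact hW.inj v w (by omega) h2 (by omega) h4 he
    · intro v h1 h2; (try dsimp only); split_ifs with e1 e2
      · exact Or.inl (by omega)
      · exact Or.inr (Or.inl (by omega))
      · exact hW.opts v (by omega) h2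
    · intro v w h1 h2 h3 h4 h5 h6
      try dsimp only at h6 ⊢
      simp only [inGN] at h6
      by_cases ew1 : w = a
      · rw [if_pos ew1] at h6 ⊢
        by_cases ev1 : v = a
        · omega
        · rw [if_neg ev1]
          by_cases ev2 : v = a + 1
          · rw [if_pos ev2]; omega
          · rw [if_neg ev2]; omega
      · rw [if_neg ew1] at h6 ⊢
        by_cases ew2 : w = a + 1
        · rw [if_pos ew2] at h6 ⊢
          by_cases ev1 : v = a
          · exfalso
            rcases h6 with g | g | ⟨g, gc⟩
            · omega
            · omega
            · exact ha (by rw [← ev1]; exact gc)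
          · rw [if_neg ev1]
            by_cases ev2 : v = a + 1
            · omega
            · rw [if_neg ev2]
              exfalso
              rcases h6 with g | g | ⟨g, gc⟩ <;> omega
        · rw [if_neg ew2] at h6 ⊢
          have hm := hW.maps w (by omega) h4
          have hbw := hB w (by omega) h4
          by_cases ev1 : v = a
          · exfalso
            rcases h6 with g | g | ⟨g, gc⟩ <;> omega
          · rw [if_neg ev1]
            by_cases ev2 : v = a + 1
            · rw [if_pos ev2]
              rcases h6 with g | g | ⟨g, gc⟩ <;> omega
            · rw [if_neg ev2]
              exact Nat.succ_lt_succ (hW.ord v w (by omega) h2 (by omega) h4 h5 h6)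
    · intro v h1 h2; (try dsimp only); split_ifs with e1 e2
      · omega
      · omega
      · have := hB v (by omega) h2; omega
  | right a b hab hb hg ih =>
    obtain ⟨f, σ, hW, hB⟩ := ih
    refine ⟨fun v => if v = b then b - 1 else if v = b - 1 then b else f v,
            fun v => if v = b then 0 else if v = b - 1 then b - a else σ v + 1,
            ⟨?_, ?_, ?_, ?_⟩, ?_⟩
    · intro v h1 h2; (try dsimp only); split_ifs with e1 e2
      · omega
      · omega
      · have := hW.maps v h1 (by omega); omega
    · intro v w h1 h2 h3 h4 he; try dsimp only at he
      split_ifs at he with e1 e2 e3 e4 e5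
      · omega
      · omega
      · have := hW.maps w h3 (by omega); omega
      · omega
      · omega
      · have := hW.maps w h3 (by omega); omega
      · have := hW.maps v h1 (by omega); omega
      · have := hW.maps v h1 (by omega); omega
      · exact hW.inj v w h1 (by omega) h3 (by omega) he
    · intro v h1 h2; (try dsimp only); split_ifs with e1 e2
      · exact Or.inr (Or.inl (by omega))
      · exact Or.inl (by omega)
      · exact hW.opts v h1 (by omega)
    · intro v w h1 h2 h3 h4 h5 h6
      try dsimp only at h6 ⊢
      simp only [inGN] at h6
      by_cases ew1 : w = b
      · rw [if_pos ew1] at h6 ⊢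
        by_cases ev1 : v = b
        · omega
        · rw [if_neg ev1]
          by_cases ev2 : v = b - 1
          · rw [if_pos ev2]; omega
          · rw [if_neg ev2]; omega
      · rw [if_neg ew1] at h6 ⊢
        by_cases ew2 : w = b - 1
        · rw [if_pos ew2] at h6 ⊢
          by_cases ev1 : v = b
          · exfalso
            rcases h6 with g | g | ⟨g, gc⟩
            · omega
            · omega
            · exact hb (by rw [← ev1]; exact gc)
          · rw [if_neg ev1]
            by_cases ev2 : v = b - 1
            · omega
            · rw [if_neg ev2]
              exfalso
              rcases h6 with g | g | ⟨g, gc⟩ <;> omega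
        · rw [if_neg ew2] at h6 ⊢
          have hm := hW.maps w h3 (by omega)
          have hbw := hB w h3 (by omega)
          by_cases ev1 : v = b
          · exfalso
            rcases h6 with g | g | ⟨g, gc⟩ <;> omega
          · rw [if_neg ev1]
            by_cases ev2 : v = b - 1
            · rw [if_pos ev2]
              rcases h6 with g | g | ⟨g, gc⟩ <;> omega
            · rw [if_neg ev2]
              exact Nat.succ_lt_succ (hW.ord v w h1 (by omega) h3 (by omega) h5 h6)
    · intro v h1 h2; (try dsimp only); split_ifs with e1 e2
      · omega
      · omega
      · have := hB v h1 (by omega); omega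

lemma mem_nUnion [Fintype V] (G : SimpleGraph V) (C : Set V) (l : List V) (u : V) :
    u ∈ nUnion G C l ↔ ∃ v ∈ l, u ∈ gN G C v := by
  classical
  unfold nUnion
  rw [Finset.mem_biUnion]
  constructor
  · rintro ⟨v, hv, hu⟩; exact ⟨v, List.mem_toFinset.mp hv, hu⟩
  · rintro ⟨v, hv, hu⟩; exact ⟨v, List.mem_toFinset.mpr hv, hu⟩

lemma adj_path {n : ℕ} (v u : ↥(Set.Icc 1 n)) :
    (pathG n).Adj v u ↔ ((v : ℕ) + 1 = (u : ℕ) ∨ (u : ℕ) + 1 = (v : ℕ)) := Iff.rfl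

lemma mem_gN_path {n : ℕ} (C : Set ℕ) (v u : ↥(Set.Icc 1 n)) :
    u ∈ gN (pathG n) {x : ↥(Set.Icc 1 n) | (x : ℕ) ∈ C} v ↔ inGN C ↑v ↑u := by
  unfold gN
  rw [Set.Finite.mem_toFinset]
  by_cases h : (v : ℕ) ∈ C
  · rw [if_pos (show v ∈ {x : ↥(Set.Icc 1 n) | (x : ℕ) ∈ C} from h)]
    constructor
    · rintro (rfl | hadj)
      · exact Or.inr (Or.inr ⟨rfl, h⟩)
      · rcases (adj_path v u).mp hadj with g | g
        · exact Or.inl g.symm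
        · exact Or.inr (Or.inl g)
    · rintro (g | g | ⟨g, _⟩)
      · exact Or.inr ((adj_path v u).mpr (Or.inl g.symm))
      · exact Or.inr ((adj_path v u).mpr (Or.inr g))
      · exact Or.inl (Subtype.ext g)
  · rw [if_neg (show ¬ v ∈ {x : ↥(Set.Icc 1 n) | (x : ℕ) ∈ C} from h)]
    constructor
    · intro hadj
      rcases (adj_path v u).mp hadj with g | g
      · exact Or.inl g.symm
      · exact Or.inr (Or.inl g)
    · rintro (g | g | ⟨g, hg⟩)
      · exact (adj_path v u).mpr (Or.inl g.symm)
      · exact (adj_path v u).mpr (Or.inr g)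
      · exact absurd hg h

lemma card_Icc_subtype (n : ℕ) : Fintype.card ↥(Set.Icc 1 n) = n := by
  rw [← Set.toFinset_card, Set.toFinset_Icc, Nat.card_Icc]; omega

lemma extractWit {n : ℕ} (hn : 1 ≤ n) (C : Set ℕ)
    (hiso : ∀ v : ↥(Set.Icc 1 n), (v : ℕ) ∉ C → ∃ w, (pathG n).Adj v w)
    (l : List ↥(Set.Icc 1 n))
    (hL : IsLegal (pathG n) {x | (x : ℕ) ∈ C} l)
    (hD : IsDom (pathG n) {x | (x : ℕ) ∈ C} l)
    (hlen : l.length = n) :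
    ∃ f σ : ℕ → ℕ, WitOn C f σ 1 n := by
  classical
  have hmem : ∀ v : ↥(Set.Icc 1 n), v ∈ l := by
    intro v
    have hu : l.toFinset = Finset.univ := Finset.eq_univ_of_card _ (by
      rw [List.toFinset_card_of_nodup hL.1, hlen, card_Icc_subtype])
    rw [← List.mem_toFinset, hu]; exact Finset.mem_univ v
  set C' : Set ↥(Set.Icc 1 n) := {x | (x : ℕ) ∈ C} with hC'
  set cov : ℕ → Finset ↥(Set.Icc 1 n) := fun i => nUnion (pathG n) C' (l.take i) with hcov
  have covmem : ∀ (i : ℕ) u, u ∈ cov i ↔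
      ∃ j : ℕ, ∃ _ : j < min i n, u ∈ gN (pathG n) C' (l[j]'(by omega)) := by
    intro i u
    rw [hcov]
    rw [mem_nUnion]
    constructor
    · rintro ⟨v, hv, hu⟩
      rw [List.mem_iff_getElem] at hv
      obtain ⟨j, hj, rfl⟩ := hv
      have hj' : j < min i n := by
        have := List.length_take (i := i) (l := l); omega
      refine ⟨j, hj', ?_⟩
      rwa [List.getElem_take] at hu
    · rintro ⟨j, hj, hu⟩
      refine ⟨l[j]'(by omega), ?_, hu⟩
      rw [List.mem_iff_getElem]
      exact ⟨j, by rw [List.length_take]; omega, List.getElem_take⟩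
  have cov0 : cov 0 = ∅ := by
    rw [hcov]
    simp only [List.take_zero]
    unfold nUnion
    simp
  have covmono : ∀ i j, i ≤ j → cov i ⊆ cov j := by
    intro i j hij u hu
    rw [covmem] at hu ⊢
    obtain ⟨k, hk, hu⟩ := hu
    exact ⟨k, by omega, hu⟩
  have hnew : ∀ i, ∀ _hi : i < n, ∃ u, u ∈ gN (pathG n) C' (l[i]'(by omega)) ∧ u ∉ cov i := by
    intro i hi
    by_cases h0 : i = 0
    · subst h0
      by_cases hc : (l[0]'(by omega) : ℕ) ∈ C
      · exact ⟨l[0]'(by omega), (mem_gN_path C _ _).mpr (Or.inr (Or.inr ⟨rfl, hc⟩)),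
          by rw [cov0]; exact Finset.notMem_empty _⟩
      · obtain ⟨w, hw⟩ := hiso _ hc
        refine ⟨w, (mem_gN_path C _ _).mpr ?_, by rw [cov0]; exact Finset.notMem_empty _⟩
        rcases (adj_path _ _).mp hw with g | g
        · exact Or.inl g.symm
        · exact Or.inr (Or.inl g)
    · have := hL.2 i (by omega) (by omega)
      rw [Finset.not_subset] at this
      obtain ⟨u, hu1, hu2⟩ := this
      refine ⟨u, ?_, hu2⟩
      simpa using hu1
  have hsplit : ∀ i, ∀ _hi : i < n, cov (i+1) = gN (pathG n) C' (l[i]'(by omega)) ∪ cov i := by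
    intro i hi
    ext u
    rw [Finset.mem_union, covmem, covmem]
    constructor
    · rintro ⟨j, hj, hu⟩
      by_cases hji : j = i
      · subst hji; exact Or.inl hu
      · exact Or.inr ⟨j, by omega, hu⟩
    · rintro (hu | ⟨j, hj, hu⟩)
      · exact ⟨i, by omega, hu⟩
      · exact ⟨j, by omega, hu⟩
  have incr : ∀ i, i < n → (cov i).card < (cov (i+1)).card := by
    intro i hi
    obtain ⟨u, hu1, hu2⟩ := hnew i hi
    refine Finset.card_lt_card ?_
    rw [Finset.ssubset_iff_of_subset (covmono i (i+1) (by omega))]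
    refine ⟨u, ?_, hu2⟩
    rw [covmem]
    exact ⟨i, by omega, hu1⟩
  have gap : ∀ k i, i + k ≤ n → (cov i).card + k ≤ (cov (i+k)).card := by
    intro k
    induction k with
    | zero => intro i _; simpa using le_refl _
    | succ k ih =>
      intro i hik
      have h1 := ih i (by omega)
      have h2 := incr (i+k) (by omega)
      have : i + (k+1) = (i + k) + 1 := by omega
      rw [this]
      omega
  have covn : (cov n).card = n := by
    have : cov n = Finset.univ := by
      have ht : l.take n = l := List.take_of_length_le (le_of_eq hlen)
      show nUnion (pathG n) C' (l.take n) = Finset.univ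
      rw [ht]
      exact hD
    rw [this, Finset.card_univ, card_Icc_subtype]
  have cardcov : ∀ i, i ≤ n → (cov i).card = i := by
    intro i hi
    have h1 := gap i 0 (by omega)
    have h2 := gap (n - i) i (by omega)
    simp only [Nat.zero_add] at h1
    rw [cov0] at h1
    simp only [Finset.card_empty] at h1
    have hni : i + (n - i) = n := by omega
    rw [hni, covn] at h2
    omega
  have hone : ∀ i, ∀ _ : i < n, ∃ u, gN (pathG n) C' (l[i]'(by omega)) \ cov i = {u} := by
    intro i hi
    rw [← Finset.card_eq_one]
    have hc := Finset.card_sdiff_add_card (gN (pathG n) C' (l[i]'(by omega))) (cov i)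
    rw [← hsplit i hi] at hc
    rw [cardcov i (by omega), cardcov (i+1) (by omega)] at hc
    omega
  choose E hE using hone
  have hidx : ∀ v : ↥(Set.Icc 1 n), l.idxOf v < n := by
    intro v
    have := List.idxOf_lt_length_iff.mpr (hmem v)
    omega
  set F : ↥(Set.Icc 1 n) → ↥(Set.Icc 1 n) := fun v => E (l.idxOf v) (hidx v) with hF
  have hgetidx : ∀ v : ↥(Set.Icc 1 n), l[l.idxOf v]'(by have := hidx v; omega) = v := by
    intro v
    exact List.getElem_idxOf (by rw [hlen]; exact hidx v)
  have key : ∀ v : ↥(Set.Icc 1 n), F v ∈ gN (pathG n) C' v ∧ F v ∉ cov (l.idxOf v) := by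
    intro v
    have h1 := hE (l.idxOf v) (hidx v)
    have h2 : F v ∈ gN (pathG n) C' (l[l.idxOf v]'(by
        have := hidx v; omega)) \ cov (l.idxOf v) := by
      rw [h1]; exact Finset.mem_singleton_self _
    rw [Finset.mem_sdiff] at h2
    rw [hgetidx v] at h2
    exact h2
  have ordkey : ∀ v w : ↥(Set.Icc 1 n), v ≠ w → F w ∈ gN (pathG n) C' v →
      l.idxOf w < l.idxOf v := by
    intro v w hne hFw
    by_contra hle
    have hne' : l.idxOf v ≠ l.idxOf w := by
      intro he
      exact hne ((List.idxOf_inj (hmem v) (y := w)).mp he)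
    have hlt : l.idxOf v < l.idxOf w := by omega
    have : F w ∈ cov (l.idxOf w) := by
      rw [covmem]
      refine ⟨l.idxOf v, by have := hidx v; omega, ?_⟩
      rw [hgetidx v]
      exact hFw
    exact (key w).2 this
  have injkey : ∀ v w : ↥(Set.Icc 1 n), F v = F w → v = w := by
    intro v w he
    by_contra hne
    have h1 : ∀ x y : ↥(Set.Icc 1 n), l.idxOf x < l.idxOf y → F x ≠ F y := by
      intro x y hlt heq
      have h2 : F x ∈ cov (l.idxOf y) := by
        rw [covmem]
        refine ⟨l.idxOf x, by have := hidx x; omega, ?_⟩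
        rw [hgetidx x]
        exact (key x).1
      rw [heq] at h2
      exact (key y).2 h2
    have hne' : l.idxOf v ≠ l.idxOf w := by
      intro hee
      exact hne ((List.idxOf_inj (hmem v) (y := w)).mp hee)
    rcases Nat.lt_or_ge (l.idxOf v) (l.idxOf w) with hlt | hge
    · exact h1 v w hlt he
    · exact h1 w v (by omega) he.symm
  refine ⟨fun x => if h : x ∈ Set.Icc 1 n then ↑(F ⟨x, h⟩) else 0,
          fun x => if h : x ∈ Set.Icc 1 n then l.idxOf ⟨x, h⟩ else 0, ?_, ?_, ?_, ?_⟩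
  · intro v h1 h2
    rw [dif_pos (Set.mem_Icc.mpr ⟨h1, h2⟩)]
    exact Set.mem_Icc.mp (F _).2
  · intro v w h1 h2 h3 h4 he
    rw [dif_pos (Set.mem_Icc.mpr ⟨h1, h2⟩), dif_pos (Set.mem_Icc.mpr ⟨h3, h4⟩)] at he
    have := injkey _ _ (Subtype.ext he)
    exact congrArg Subtype.val this
  · intro v h1 h2
    rw [dif_pos (Set.mem_Icc.mpr ⟨h1, h2⟩)]
    exact (mem_gN_path C _ _).mp (key ⟨v, Set.mem_Icc.mpr ⟨h1, h2⟩⟩).1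
  · intro v w h1 h2 h3 h4 h5 h6
    rw [dif_pos (Set.mem_Icc.mpr ⟨h3, h4⟩)] at h6
    rw [dif_pos (Set.mem_Icc.mpr ⟨h1, h2⟩), dif_pos (Set.mem_Icc.mpr ⟨h3, h4⟩)]
    refine ordkey _ _ (fun he => h5 (congrArg Subtype.val he)) ?_
    exact (mem_gN_path C _ _).mpr h6

lemma witToList {n : ℕ} (hn : 1 ≤ n) (C : Set ℕ) (f σ : ℕ → ℕ) (hW : WitOn C f σ 1 n) :
    ∃ l : List ↥(Set.Icc 1 n), IsLegal (pathG n) {x | (x : ℕ) ∈ C} l ∧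
      IsDom (pathG n) {x | (x : ℕ) ∈ C} l ∧ l.length = n := by
  classical
  set C' : Set ↥(Set.Icc 1 n) := {x | (x : ℕ) ∈ C} with hC'
  set l : List ↥(Set.Icc 1 n) :=
    (Finset.univ.toList (α := ↥(Set.Icc 1 n))).mergeSort
      (fun u v => decide (σ ↑u ≤ σ ↑v)) with hl
  have hperm : l.Perm (Finset.univ.toList (α := ↥(Set.Icc 1 n))) :=
    List.mergeSort_perm _ _
  have hnodup : l.Nodup := hperm.nodup_iff.mpr (Finset.nodup_toList _)
  have hlen : l.length = n := by
    rw [hperm.length_eq, Finset.length_toList, Finset.card_univ, card_Icc_subtype]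
  have hmem : ∀ v : ↥(Set.Icc 1 n), v ∈ l := by
    intro v
    rw [hperm.mem_iff, Finset.mem_toList]
    exact Finset.mem_univ v
  have hsorted : ∀ i j : ℕ, ∀ hi : i < l.length, ∀ hj : j < l.length, i < j →
      σ ↑(l[i]'hi) ≤ σ ↑(l[j]'hj) := by
    have hp := List.pairwise_mergeSort (le := fun u v : ↥(Set.Icc 1 n) => decide (σ ↑u ≤ σ ↑v))
      (by intro a b c hab hbc; simp only [decide_eq_true_eq] at *; omega)
      (by intro a b; simp only [Bool.or_eq_true, decide_eq_true_eq]; omega)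
      (Finset.univ.toList (α := ↥(Set.Icc 1 n)))
    rw [List.pairwise_iff_getElem] at hp
    intro i j hi hj hij
    have := hp i j (by rw [← hl] at *; omega) (by rw [← hl] at *; omega) hij
    simpa using this
  set F : ↥(Set.Icc 1 n) → ↥(Set.Icc 1 n) :=
    fun v => ⟨f ↑v, Set.mem_Icc.mpr (hW.maps ↑v v.2.1 v.2.2)⟩ with hF
  have hFgN : ∀ v : ↥(Set.Icc 1 n), F v ∈ gN (pathG n) C' v := by
    intro v
    exact (mem_gN_path C v (F v)).mpr (hW.opts ↑v v.2.1 v.2.2)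
  have hFinj : Function.Injective F := by
    intro v w he
    have : f ↑v = f ↑w := congrArg Subtype.val he
    exact Subtype.ext (hW.inj ↑v ↑w v.2.1 v.2.2 w.2.1 w.2.2 this)
  refine ⟨l, ⟨hnodup, ?_⟩, ?_, hlen⟩
  · intro i h h0 hsub
    have hx := hsub (hFgN (l[i]'h))
    rw [mem_nUnion] at hx
    obtain ⟨y, hy, hygN⟩ := hx
    rw [List.mem_iff_getElem] at hy
    obtain ⟨j, hj, rfl⟩ := hy
    have hjlen : j < l.length := by
      have := List.length_take (i := i) (l := l)
      omega
    have hji : j < i := by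
      have := List.length_take (i := i) (l := l)
      omega
    rw [List.getElem_take] at hygN
    have hne : l[j]'hjlen ≠ l[i]'h := by
      intro he
      exact absurd (hnodup.getElem_inj_iff.mp he) (by omega)
    have hord : σ ↑(l[i]'h) < σ ↑(l[j]'hjlen) := by
      refine hW.ord ↑(l[j]'hjlen) ↑(l[i]'h) (l[j]'hjlen).2.1 (l[j]'hjlen).2.2
        (l[i]'h).2.1 (l[i]'h).2.2
        (fun he => hne (Subtype.ext he)) ?_
      exact (mem_gN_path C (l[j]'hjlen) (F (l[i]'h))).mp hygN
    have hs := hsorted j i hjlen h hji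
    omega
  · rw [IsDom, Finset.eq_univ_iff_forall]
    intro u
    have hFbij : Function.Bijective F := (Finite.injective_iff_bijective).mp hFinj
    obtain ⟨v, rfl⟩ := hFbij.2 u
    rw [mem_nUnion]
    exact ⟨v, hmem v, hFgN v⟩

lemma badList {n : ℕ} (hn : 2 ≤ n) (C : Set ℕ) (h2C : n = 2 → (1 : ℕ) ∈ C) :
    ∃ l : List ↥(Set.Icc 1 n), IsLegal (pathG n) {x | (x : ℕ) ∈ C} l ∧
      IsDom (pathG n) {x | (x : ℕ) ∈ C} l ∧ l.length = n - 1 := by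
  classical
  set C' : Set ↥(Set.Icc 1 n) := {x | (x : ℕ) ∈ C} with hC'
  set l : List ↥(Set.Icc 1 n) :=
    List.ofFn (fun i : Fin (n-1) => (⟨(i : ℕ) + 1, Set.mem_Icc.mpr ⟨by omega, by
      have := i.2; omega⟩⟩ : ↥(Set.Icc 1 n))) with hl
  have hlen : l.length = n - 1 := by rw [hl, List.length_ofFn]
  have hget : ∀ i : ℕ, ∀ hi : i < l.length, (l[i]'hi : ℕ) = i + 1 := by
    intro i hi
    simp [hl, List.getElem_ofFn]
  refine ⟨l, ⟨?_, ?_⟩, ?_, hlen⟩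
  · rw [List.nodup_iff_injective_get]
    intro i j he
    have h1 : (l.get i : ℕ) = (i : ℕ) + 1 := by rw [List.get_eq_getElem]; exact hget i.1 i.2
    have h2 : (l.get j : ℕ) = (j : ℕ) + 1 := by rw [List.get_eq_getElem]; exact hget j.1 j.2
    have : (i : ℕ) = (j : ℕ) := by rw [he] at h1; omega
    exact Fin.ext this
  · intro i h h0 hsub
    have hin : i + 2 ≤ n := by
      have := hlen; omega
    have hx : (⟨i + 2, Set.mem_Icc.mpr ⟨by omega, hin⟩⟩ : ↥(Set.Icc 1 n)) ∈
        gN (pathG n) C' (l[i]'h) := by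
      refine (mem_gN_path C _ _).mpr ?_
      refine Or.inl ?_
      show (i + 2 : ℕ) = (l[i]'h : ℕ) + 1
      rw [hget i h]
    have hx2 := hsub hx
    rw [mem_nUnion] at hx2
    obtain ⟨y, hy, hygN⟩ := hx2
    rw [List.mem_iff_getElem] at hy
    obtain ⟨j, hj, rfl⟩ := hy
    have hjlen : j < l.length := by have := List.length_take (i := i) (l := l); omega
    have hji : j < i := by have := List.length_take (i := i) (l := l); omega
    rw [List.getElem_take] at hygN
    have := (mem_gN_path C _ _).mp hygN
    rw [hget j hjlen] at this
    rcases this with g | g | ⟨g, _⟩ <;> simp only [] at g <;> omega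
  · rw [IsDom, Finset.eq_univ_iff_forall]
    intro u
    rw [mem_nUnion]
    have hu1 : 1 ≤ (u : ℕ) := u.2.1
    have hu2 : (u : ℕ) ≤ n := u.2.2
    by_cases hu : 2 ≤ (u : ℕ)
    · have hidx : (u : ℕ) - 2 < l.length := by omega
      refine ⟨l[(u : ℕ) - 2]'hidx, List.getElem_mem _, ?_⟩
      refine (mem_gN_path C _ _).mpr ?_
      rw [hget _ hidx]
      exact Or.inl (by omega)
    · -- u = 1
      have hu1' : (u : ℕ) = 1 := by omega
      by_cases h3 : 3 ≤ n
      · have hidx : 1 < l.length := by omega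
        refine ⟨l[1]'hidx, List.getElem_mem _, ?_⟩
        refine (mem_gN_path C _ _).mpr ?_
        rw [hget _ hidx]
        exact Or.inr (Or.inl (by omega))
      · have hn2 : n = 2 := by omega
        have hidx : 0 < l.length := by omega
        refine ⟨l[0]'hidx, List.getElem_mem _, ?_⟩
        refine (mem_gN_path C _ _).mpr ?_
        rw [hget _ hidx]
        exact Or.inr (Or.inr ⟨by omega, by rw [show (0:ℕ)+1 = 1 from rfl]; exact h2C hn2⟩)

theorem grundy_path (n : ℕ) (hn : 1 ≤ n) (C : Set ℕ) (hC : C ⊆ Set.Icc 1 n)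
    (hiso : ∀ v : ↥(Set.Icc 1 n), (v : ℕ) ∉ C → ∃ w, (pathG n).Adj v w) :
    (GoodConf C 1 n → grundy (pathG n) {v : ↥(Set.Icc 1 n) | (v : ℕ) ∈ C} = n) ∧
    (¬ GoodConf C 1 n → grundy (pathG n) {v : ↥(Set.Icc 1 n) | (v : ℕ) ∈ C} = n - 1) := by
  classical
  have hub : ∀ k ∈ {k : ℕ | ∃ l : List ↥(Set.Icc 1 n),
      IsLegal (pathG n) {v : ↥(Set.Icc 1 n) | (v : ℕ) ∈ C} l ∧
      IsDom (pathG n) {v : ↥(Set.Icc 1 n) | (v : ℕ) ∈ C} l ∧ l.length = k}, k ≤ n := by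
    rintro k ⟨l, hl, _, rfl⟩
    calc l.length ≤ Fintype.card ↥(Set.Icc 1 n) := hl.1.length_le_card
    _ = n := card_Icc_subtype n
  have hbdd : BddAbove {k : ℕ | ∃ l : List ↥(Set.Icc 1 n),
      IsLegal (pathG n) {v : ↥(Set.Icc 1 n) | (v : ℕ) ∈ C} l ∧
      IsDom (pathG n) {v : ↥(Set.Icc 1 n) | (v : ℕ) ∈ C} l ∧ l.length = k} := ⟨n, hub⟩
  constructor
  · intro hg
    obtain ⟨f, σ, hW, _⟩ := goodToWit hg
    obtain ⟨l, h1, h2, h3⟩ := witToList hn C f σ hW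
    have hnS : n ∈ {k : ℕ | ∃ l : List ↥(Set.Icc 1 n),
        IsLegal (pathG n) {v : ↥(Set.Icc 1 n) | (v : ℕ) ∈ C} l ∧
        IsDom (pathG n) {v : ↥(Set.Icc 1 n) | (v : ℕ) ∈ C} l ∧ l.length = n} := ⟨l, h1, h2, h3⟩
    exact le_antisymm (csSup_le ⟨n, hnS⟩ hub) (le_csSup hbdd hnS)
  · intro hbad
    have hn2 : 2 ≤ n := by
      rcases Nat.lt_or_ge n 2 with h2 | h2
      · exfalso
        have hn1 : n = 1 := by omega
        subst hn1
        refine hbad (GoodConf.single 1 ?_)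
        by_contra h1C
        obtain ⟨w, hw⟩ := hiso ⟨1, Set.mem_Icc.mpr ⟨le_refl 1, le_refl 1⟩⟩ h1C
        have hw1 : 1 ≤ (w : ℕ) := w.2.1
        have hw2 : (w : ℕ) ≤ 1 := w.2.2
        have hcoe : ((⟨1, Set.mem_Icc.mpr ⟨le_refl 1, le_refl 1⟩⟩ : ↥(Set.Icc 1 1)) : ℕ) = 1 :=
          rfl
        rcases (adj_path _ _).mp hw with g | g <;> omega
      · exact h2
    have h2C : n = 2 → (1 : ℕ) ∈ C := by
      intro hn2'
      subst hn2'
      by_contra h1C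
      exact hbad (GoodConf.pair 1 (fun hb => h1C hb.1))
    obtain ⟨l, h1, h2, h3⟩ := badList hn2 C h2C
    have hmemS : n - 1 ∈ {k : ℕ | ∃ l : List ↥(Set.Icc 1 n),
        IsLegal (pathG n) {v : ↥(Set.Icc 1 n) | (v : ℕ) ∈ C} l ∧
        IsDom (pathG n) {v : ↥(Set.Icc 1 n) | (v : ℕ) ∈ C} l ∧ l.length = n - 1} :=
      ⟨l, h1, h2, h3⟩
    have hub1 : ∀ k ∈ {k : ℕ | ∃ l : List ↥(Set.Icc 1 n),
        IsLegal (pathG n) {v : ↥(Set.Icc 1 n) | (v : ℕ) ∈ C} l ∧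
        IsDom (pathG n) {v : ↥(Set.Icc 1 n) | (v : ℕ) ∈ C} l ∧ l.length = k}, k ≤ n - 1 := by
      rintro k ⟨l', hl1, hl2, rfl⟩
      have hkn := hub _ ⟨l', hl1, hl2, rfl⟩
      by_contra hgt
      have hleq : l'.length = n := by omega
      obtain ⟨f, σ, hW⟩ := extractWit hn C hiso l' hl1 hl2 hleq
      exact hbad (witToGood n 1 n (by omega) hn hW)
    exact le_antisymm (csSup_le ⟨n - 1, hmemS⟩ hub1) (le_csSup hbdd hmemS)

end LegalSeq
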